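/- arXiv:1203.1214 — 9 statements merged into one kernel-verified Lean document; each statement's English description precedes it below -/
import Mathlib

section
/- For all complex numbers z₁, z₂ and all real a with 0 < a < 1, the chordal distance κ(z₁,z₂) := |z₁ - z₂| / (√(1+|z₁|²) · √(1+|z₂|²)) satisfies κ(z₁,z₂) ≥ min{ (a²/(1+a²))·|z₁ - z₂|, (a²/(1+a²))·|1/z₁ - 1/z₂|, (1-a²)/(1+a²) }, where in the case z₁ = 0 or z₂ = 0 the middle term is interpreted as only applying when both z₁, z₂ are nonzero (equivalently, the inequality holds with the convention that the middle quantity is +∞ if z₁ = 0 or z₂ = 0). -/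
private lemma chordal_L1 (a : ℝ) (z₁ z₂ : ℂ) (ha0 : 0 < a)
    (h1 : ‖z₁‖ ≤ 1/a) (h2 : ‖z₂‖ ≤ 1/a) :
    a ^ 2 / (1 + a ^ 2) * ‖z₁ - z₂‖ ≤
      ‖z₁ - z₂‖ / (Real.sqrt (1 + ‖z₁‖ ^ 2) * Real.sqrt (1 + ‖z₂‖ ^ 2)) := by
  have hd : (0:ℝ) ≤ ‖z₁ - z₂‖ := norm_nonneg _
  have hC : Real.sqrt (1 + (1/a)^2) * Real.sqrt (1 + (1/a)^2) = 1 + (1/a)^2 :=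
    Real.mul_self_sqrt (by positivity)
  have hS1 : Real.sqrt (1 + ‖z₁‖ ^ 2) ≤ Real.sqrt (1 + (1/a)^2) :=
    Real.sqrt_le_sqrt (by nlinarith [norm_nonneg z₁])
  have hS2 : Real.sqrt (1 + ‖z₂‖ ^ 2) ≤ Real.sqrt (1 + (1/a)^2) :=
    Real.sqrt_le_sqrt (by nlinarith [norm_nonneg z₂])
  have hSpos : (0:ℝ) < Real.sqrt (1 + ‖z₁‖ ^ 2) * Real.sqrt (1 + ‖z₂‖ ^ 2) := by positivity
  have hSC : Real.sqrt (1 + ‖z₁‖ ^ 2) * Real.sqrt (1 + ‖z₂‖ ^ 2) ≤ (1 + a^2)/a^2 := by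
    calc Real.sqrt (1 + ‖z₁‖ ^ 2) * Real.sqrt (1 + ‖z₂‖ ^ 2)
        ≤ Real.sqrt (1 + (1/a)^2) * Real.sqrt (1 + (1/a)^2) := by
          apply mul_le_mul hS1 hS2 (Real.sqrt_nonneg _) (Real.sqrt_nonneg _)
      _ = 1 + (1/a)^2 := hC
      _ = (1 + a^2)/a^2 := by field_simp; ring
  rw [le_div_iff₀ hSpos]
  have h1' : a ^ 2 / (1 + a ^ 2) * ‖z₁ - z₂‖ * (Real.sqrt (1 + ‖z₁‖ ^ 2) * Real.sqrt (1 + ‖z₂‖ ^ 2))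
      ≤ a ^ 2 / (1 + a ^ 2) * ‖z₁ - z₂‖ * ((1 + a^2)/a^2) :=
    mul_le_mul_of_nonneg_left hSC (by positivity)
  have h2' : a ^ 2 / (1 + a ^ 2) * ‖z₁ - z₂‖ * ((1 + a^2)/a^2) = ‖z₁ - z₂‖ := by
    field_simp
  linarith

private lemma chordal_L2 (a r R d : ℝ) (ha0 : 0 < a) (ha1 : a < 1) (hr : 0 ≤ r)
    (hra : r ≤ a) (hR : 1 ≤ a * R) (hd : R - r ≤ d) :
    (1 - a ^ 2) / (1 + a ^ 2) ≤ d / (Real.sqrt (1 + r ^ 2) * Real.sqrt (1 + R ^ 2)) := by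
  have h1a : (0:ℝ) < 1 - a^2 := by nlinarith
  have hRr : (0:ℝ) < R - r := by nlinarith
  have ht : (0:ℝ) ≤ a*R - 1 := by linarith
  have hs : (0:ℝ) ≤ a - r := by linarith
  have hF : (1 + r^2) * (1 + R^2) * (1 - a^2)^2 ≤ ((R - r) * (1 + a^2))^2 := by
    have h4 : (0:ℝ) < a^4 := by positivity
    rw [← mul_le_mul_iff_right₀ h4]
    have A1 : (0:ℝ) ≤ a^2*(1+a^2)*(1-a^2)*((a-r)*r) :=
      mul_nonneg (mul_nonneg (by positivity) h1a.le) (mul_nonneg hs hr)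
    have A2 : (0:ℝ) ≤ a^2*(1+a^2)*(3-a^2)*(a-r)^2 :=
      mul_nonneg (mul_nonneg (by positivity) (by nlinarith)) (sq_nonneg _)
    have A3 : (0:ℝ) ≤ a^2*(1-a^2)^2*((a-r)*r)*(a*R-1) :=
      mul_nonneg (mul_nonneg (by positivity) (mul_nonneg hs hr)) ht
    have A4 : (0:ℝ) ≤ a^3*(1+a^4)*(a-r)*(a*R-1) :=
      mul_nonneg (mul_nonneg (by positivity) hs) ht
    have A5 : (0:ℝ) ≤ a^4*(1-a^2)*(1+a^2)*(a*R-1) :=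
      mul_nonneg (mul_nonneg (mul_nonneg (by positivity) h1a.le) (by positivity)) ht
    have A6 : (0:ℝ) ≤ a^2*(1-a^2)^2*(a-r)*(a+r)*(a*R-1)^2 :=
      mul_nonneg (mul_nonneg (mul_nonneg (by positivity) hs) (by linarith)) (sq_nonneg _)
    have A7 : (0:ℝ) ≤ a^4*(3+2*a^2-a^4)*(a*R-1)^2 :=
      mul_nonneg (mul_nonneg (by positivity) (by nlinarith)) (sq_nonneg _)
    nlinarith [A1, A2, A3, A4, A5, A6, A7]
  have hkey : Real.sqrt (1 + r ^ 2) * Real.sqrt (1 + R ^ 2) ≤ (R - r) * (1 + a^2) / (1 - a^2) := by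
    rw [← Real.sqrt_mul (by positivity)]
    have h1 : (1 + r^2) * (1 + R^2) ≤ ((R - r) * (1 + a^2) / (1 - a^2))^2 := by
      rw [div_pow, le_div_iff₀ (by positivity)]
      linarith
    calc Real.sqrt ((1 + r^2) * (1 + R^2)) ≤ Real.sqrt (((R - r) * (1 + a^2) / (1 - a^2))^2) :=
          Real.sqrt_le_sqrt h1
      _ = (R - r) * (1 + a^2) / (1 - a^2) := Real.sqrt_sq (by positivity)
  have hSpos : (0:ℝ) < Real.sqrt (1 + r ^ 2) * Real.sqrt (1 + R ^ 2) := by positivity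
  rw [div_le_div_iff₀ (by positivity) hSpos]
  have : (1 - a^2) * ((R - r) * (1 + a^2) / (1 - a^2)) = (R - r) * (1 + a^2) := by
    field_simp
  nlinarith [mul_le_mul_of_nonneg_left hkey h1a.le]

private lemma chordal_L3 (a : ℝ) (z₁ z₂ : ℂ) (ha0 : 0 < a) (ha1 : a < 1)
    (h1 : ‖z₁‖ ≤ a) (h2 : 1/a ≤ ‖z₂‖) :
    (1 - a ^ 2) / (1 + a ^ 2) ≤
      ‖z₁ - z₂‖ / (Real.sqrt (1 + ‖z₁‖ ^ 2) * Real.sqrt (1 + ‖z₂‖ ^ 2)) := by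
  apply chordal_L2 a ‖z₁‖ ‖z₂‖ _ ha0 ha1 (norm_nonneg _) h1
  · rw [div_le_iff₀ ha0] at h2; linarith [mul_comm ‖z₂‖ a]
  · calc ‖z₂‖ - ‖z₁‖ ≤ ‖z₂ - z₁‖ := norm_sub_norm_le _ _
      _ = ‖z₁ - z₂‖ := norm_sub_rev _ _

private lemma chordal_inv (z₁ z₂ : ℂ) (h1 : z₁ ≠ 0) (h2 : z₂ ≠ 0) :
    ‖z₁ - z₂‖ / (Real.sqrt (1 + ‖z₁‖ ^ 2) * Real.sqrt (1 + ‖z₂‖ ^ 2)) =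
    ‖z₁⁻¹ - z₂⁻¹‖ / (Real.sqrt (1 + ‖z₁⁻¹‖ ^ 2) * Real.sqrt (1 + ‖z₂⁻¹‖ ^ 2)) := by
  have hn1 : (0:ℝ) < ‖z₁‖ := norm_pos_iff.2 h1
  have hn2 : (0:ℝ) < ‖z₂‖ := norm_pos_iff.2 h2
  have e1 : ‖z₁⁻¹ - z₂⁻¹‖ = ‖z₁ - z₂‖ / (‖z₁‖ * ‖z₂‖) := by
    have h : z₁⁻¹ - z₂⁻¹ = (z₂ - z₁) * (z₁⁻¹ * z₂⁻¹) := by field_simp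
    rw [h, norm_mul, norm_mul, norm_inv, norm_inv, norm_sub_rev]
    field_simp
  have e2 : ∀ z : ℂ, z ≠ 0 → Real.sqrt (1 + ‖z⁻¹‖ ^ 2) = Real.sqrt (1 + ‖z‖ ^ 2) / ‖z‖ := by
    intro z hz
    have hz' : (0:ℝ) < ‖z‖ := norm_pos_iff.2 hz
    rw [norm_inv, show 1 + ‖z‖⁻¹ ^ 2 = (1 + ‖z‖^2) / ‖z‖^2 by
        rw [eq_div_iff (by positivity : (‖z‖:ℝ)^2 ≠ 0), add_mul, one_mul,
          ← mul_pow, inv_mul_cancel₀ hz'.ne', one_pow, add_comm],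
      Real.sqrt_div (by positivity), Real.sqrt_sq hz'.le]
  rw [e1, e2 z₁ h1, e2 z₂ h2, div_eq_div_iff (by positivity)
    (ne_of_gt (mul_pos (div_pos (by positivity) hn1) (div_pos (by positivity) hn2)))]
  ring

/-- Partington's lower bound for the chordal metric
`κ(z₁,z₂) = ‖z₁ - z₂‖ / (√(1+‖z₁‖²)·√(1+‖z₂‖²))` on `ℂ`:
for `0 < a < 1` it is bounded below by the minimum of
`(a²/(1+a²))·‖z₁-z₂‖`, `(a²/(1+a²))·‖1/z₁ - 1/z₂‖` and `(1-a²)/(1+a²)`,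
where the middle term only applies when both `z₁, z₂` are nonzero
(it is `+∞` by convention when `z₁ = 0` or `z₂ = 0`). -/
theorem chordal_lower_bound (z₁ z₂ : ℂ) (a : ℝ) (ha0 : 0 < a) (ha1 : a < 1) :
    (z₁ ≠ 0 → z₂ ≠ 0 →
      ‖z₁ - z₂‖ / (Real.sqrt (1 + ‖z₁‖ ^ 2) * Real.sqrt (1 + ‖z₂‖ ^ 2)) ≥
        min (min (a ^ 2 / (1 + a ^ 2) * ‖z₁ - z₂‖)
              (a ^ 2 / (1 + a ^ 2) * ‖z₁⁻¹ - z₂⁻¹‖))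
          ((1 - a ^ 2) / (1 + a ^ 2))) ∧
    ((z₁ = 0 ∨ z₂ = 0) →
      ‖z₁ - z₂‖ / (Real.sqrt (1 + ‖z₁‖ ^ 2) * Real.sqrt (1 + ‖z₂‖ ^ 2)) ≥
        min (a ^ 2 / (1 + a ^ 2) * ‖z₁ - z₂‖) ((1 - a ^ 2) / (1 + a ^ 2))) := by
  have ha1' : 1 ≤ 1/a := by rw [le_div_iff₀ ha0]; linarith
  constructor
  · intro h1 h2
    rcases le_or_gt ‖z₁‖ (1/a) with c1 | c1
    · rcases le_or_gt ‖z₂‖ (1/a) with c2 | c2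
      · exact le_trans (le_trans (min_le_left _ _) (min_le_left _ _))
          (chordal_L1 a z₁ z₂ ha0 c1 c2)
      · rcases le_or_gt a ‖z₁‖ with c3 | c3
        · -- both norms ≥ a : invert
          have hi1 : ‖z₁⁻¹‖ ≤ 1/a := by
            rw [norm_inv]
            rw [← one_div]
            exact one_div_le_one_div_of_le ha0 c3
          have hi2 : ‖z₂⁻¹‖ ≤ 1/a := by
            rw [norm_inv]
            rw [← one_div]
            exact one_div_le_one_div_of_le ha0 (le_trans (le_trans ha1.le ha1') c2.le)
          rw [ge_iff_le, chordal_inv z₁ z₂ h1 h2]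
          exact le_trans (le_trans (min_le_left _ _) (min_le_right _ _))
            (chordal_L1 a z₁⁻¹ z₂⁻¹ ha0 hi1 hi2)
        · exact le_trans (min_le_right _ _) (chordal_L3 a z₁ z₂ ha0 ha1 c3.le c2.le)
    · rcases le_or_gt a ‖z₂‖ with c3 | c3
      · have hi1 : ‖z₁⁻¹‖ ≤ 1/a := by
          rw [norm_inv]
          rw [← one_div]
          exact one_div_le_one_div_of_le ha0 (le_trans (le_trans ha1.le ha1') c1.le)
        have hi2 : ‖z₂⁻¹‖ ≤ 1/a := by
          rw [norm_inv]
          rw [← one_div]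
          exact one_div_le_one_div_of_le ha0 c3
        rw [ge_iff_le, chordal_inv z₁ z₂ h1 h2]
        exact le_trans (le_trans (min_le_left _ _) (min_le_right _ _))
          (chordal_L1 a z₁⁻¹ z₂⁻¹ ha0 hi1 hi2)
      · have := chordal_L3 a z₂ z₁ ha0 ha1 c3.le c1.le
        rw [norm_sub_rev z₂ z₁, mul_comm (Real.sqrt (1 + ‖z₂‖ ^ 2))] at this
        exact le_trans (min_le_right _ _) this
  · intro h
    rcases h with h | h
    · subst h
      rcases le_or_gt ‖z₂‖ (1/a) with c | c
      · exact le_trans (min_le_left _ _)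
          (chordal_L1 a 0 z₂ ha0 (by simp only [norm_zero]; positivity) c)
      · exact le_trans (min_le_right _ _)
          (chordal_L3 a 0 z₂ ha0 ha1 (by simpa using ha0.le) c.le)
    · subst h
      rcases le_or_gt ‖z₁‖ (1/a) with c | c
      · exact le_trans (min_le_left _ _)
          (chordal_L1 a z₁ 0 ha0 c (by simp only [norm_zero]; positivity))
      · have := chordal_L3 a 0 z₁ ha0 ha1 (by simpa using ha0.le) c.le
        rw [norm_sub_rev 0 z₁, mul_comm (Real.sqrt (1 + ‖(0:ℂ)‖ ^ 2))] at this
        simpa using le_trans (min_le_right _ _) this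
end

section
/- If z₁, z₂ are complex numbers with |z₁| ≤ a and |z₂| ≥ 1/a for some real a with 0 < a < 1, then the chordal distance satisfies |z₁ - z₂| / (√(1+|z₁|²)·√(1+|z₂|²)) ≥ (1-a²)/(1+a²). -/
/-- If `‖z₁‖ ≤ a` and `‖z₂‖ ≥ 1/a` with `0 < a < 1`, then the chordal distance
between `z₁` and `z₂` is at least `(1-a²)/(1+a²)`. -/
theorem chordal_caps_distance (z₁ z₂ : ℂ) (a : ℝ) (ha0 : 0 < a) (ha1 : a < 1)
    (h₁ : ‖z₁‖ ≤ a) (h₂ : ‖z₂‖ ≥ 1 / a) :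
    ‖z₁ - z₂‖ / (Real.sqrt (1 + ‖z₁‖ ^ 2) * Real.sqrt (1 + ‖z₂‖ ^ 2)) ≥
      (1 - a ^ 2) / (1 + a ^ 2) := by
  set r₁ := ‖z₁‖ with hr₁
  set r₂ := ‖z₂‖ with hr₂
  have hr₁0 : 0 ≤ r₁ := norm_nonneg _
  have hr₂0 : 0 < r₂ := lt_of_lt_of_le (by positivity) h₂
  -- numerator bound
  have hnum0 : r₂ - r₁ ≤ ‖z₁ - z₂‖ := by
    have := norm_sub_norm_le z₂ z₁
    rw [norm_sub_rev] at this
    linarith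
  have ha2r : a ≤ a ^ 2 * r₂ := by
    have : a ^ 2 * (1 / a) ≤ a ^ 2 * r₂ := by
      apply mul_le_mul_of_nonneg_left h₂ (by positivity)
    calc a = a ^ 2 * (1 / a) := by field_simp
      _ ≤ a ^ 2 * r₂ := this
  have hnum : (1 - a ^ 2) * r₂ ≤ ‖z₁ - z₂‖ := by nlinarith
  -- denominator bound
  have hd1 : Real.sqrt (1 + r₁ ^ 2) ≤ Real.sqrt (1 + a ^ 2) := by
    apply Real.sqrt_le_sqrt; nlinarith
  have hd2 : Real.sqrt (1 + r₂ ^ 2) ≤ Real.sqrt (1 + a ^ 2) * r₂ := by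
    have har : 1 ≤ a * r₂ := by
      rw [ge_iff_le, div_le_iff₀ ha0] at h₂; linarith
    have h1 : 1 ≤ a ^ 2 * r₂ ^ 2 := by nlinarith
    have : Real.sqrt (1 + r₂ ^ 2) ≤ Real.sqrt ((1 + a ^ 2) * r₂ ^ 2) := by
      apply Real.sqrt_le_sqrt; nlinarith
    rwa [Real.sqrt_mul (by positivity), Real.sqrt_sq hr₂0.le] at this
  have hden : Real.sqrt (1 + r₁ ^ 2) * Real.sqrt (1 + r₂ ^ 2) ≤ (1 + a ^ 2) * r₂ := by
    have hs : Real.sqrt (1 + a ^ 2) * (Real.sqrt (1 + a ^ 2) * r₂) = (1 + a ^ 2) * r₂ := by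
      rw [← mul_assoc, Real.mul_self_sqrt (by positivity)]
    calc Real.sqrt (1 + r₁ ^ 2) * Real.sqrt (1 + r₂ ^ 2)
        ≤ Real.sqrt (1 + a ^ 2) * (Real.sqrt (1 + a ^ 2) * r₂) := by
          apply mul_le_mul hd1 hd2 (Real.sqrt_nonneg _) (Real.sqrt_nonneg _)
      _ = (1 + a ^ 2) * r₂ := hs
  have hdenpos : 0 < Real.sqrt (1 + r₁ ^ 2) * Real.sqrt (1 + r₂ ^ 2) := by positivity
  rw [ge_iff_le, div_le_div_iff₀ (by positivity) hdenpos]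
  have hnn : 0 ≤ 1 - a ^ 2 := by nlinarith
  nlinarith [mul_le_mul_of_nonneg_left hden hnn, mul_le_mul_of_nonneg_left hnum (by positivity : (0:ℝ) ≤ 1 + a ^ 2)]
end

section
/- Let R be a commutative integral domain with 1, let p = n/d be an element of the field of fractions of R with n, d ∈ R, d ≠ 0, and let c ∈ R. If d - nc is invertible in R, then all four closed-loop transfer functions 1/(1-pc) = d(d-nc)⁻¹, p/(1-pc) = n(d-nc)⁻¹, c/(1-pc) = cd(d-nc)⁻¹, and pc/(1-pc) = -1 + d(d-nc)⁻¹ belong to R, i.e., the plant p is stabilized by c. -/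
/-- If `p = n/d` in the field of fractions of an integral domain `R` and
`d - nc` is invertible in `R` with inverse `w`, then all four closed-loop
transfer functions `1/(1-pc)`, `p/(1-pc)`, `c/(1-pc)` and `pc/(1-pc)` lie in
`R`, being the images of `dw`, `nw`, `cdw` and `-1 + dw` respectively. -/
theorem stabilized_of_isUnit {R : Type*} [CommRing R] [IsDomain R]
    (n d c w : R) (hd : d ≠ 0) (hw : w * (d - n * c) = 1) :
    letI K := FractionRing R
    letI ι := algebraMap R K
    letI p : K := ι n / ι d
    ι (d * w) = 1 / (1 - p * ι c) ∧
    ι (n * w) = p / (1 - p * ι c) ∧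
    ι (c * d * w) = ι c / (1 - p * ι c) ∧
    ι (-1 + d * w) = p * ι c / (1 - p * ι c) := by
  set K := FractionRing R
  set ι := algebraMap R K with hι
  have hinj : Function.Injective ι := IsFractionRing.injective R K
  have hd' : ι d ≠ 0 := fun h => hd (hinj (by simpa using h))
  have hw' : ι w * (ι d - ι n * ι c) = 1 := by
    rw [← map_mul, ← map_sub, ← map_mul, hw, map_one]
  have hu : ι d - ι n * ι c ≠ 0 := by
    intro h; rw [h, mul_zero] at hw'; simp at hw'
  have hden : 1 - ι n / ι d * ι c ≠ 0 := by
    rw [div_mul_eq_mul_div, one_sub_div hd']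
    exact div_ne_zero hu hd'
  refine ⟨?_, ?_, ?_, ?_⟩
  · simp only [map_mul]
    rw [eq_div_iff hden]
    field_simp
    linear_combination hw' - ι w * ι n * ι c * mul_inv_cancel₀ hd'
  · simp only [map_mul]
    rw [eq_div_iff hden]
    field_simp
    linear_combination ι n * (ι d)⁻¹ * hw' - ι n * ι w * mul_inv_cancel₀ hd'
  · simp only [map_mul]
    rw [eq_div_iff hden]
    field_simp
    linear_combination ι c * hw' - ι c ^ 2 * ι n * ι w * mul_inv_cancel₀ hd'
  · simp only [map_mul, map_add, map_neg, map_one]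
    rw [eq_div_iff hden]
    field_simp
    linear_combination hw' - ι w * ι n * ι c * mul_inv_cancel₀ hd'
end

section
/- Let R be a commutative integral domain with 1 that is a full subring of a complex commutative unital semisimple Banach algebra S (i.e., there is an injective ring homomorphism ι : R → S, and whenever ι(x) is invertible in S then x is invertible in R). For coprime factorizable plants p₁ = n₁/d₁, p₂ = n₂/d₂ over R, define κ(p₁,p₂) = sup over characters φ of S of |φ(n₁)φ(d₂) - φ(n₂)φ(d₁)| / (√(|φ(n₁)|² + |φ(d₁)|²)·√(|φ(n₂)|² + |φ(d₂)|²)). Then κ is a metric on the set S(R) of plants in F(R) admitting a coprime factorization over R: κ is well-defined (independent of choice of coprime factorization), nonnegative, symmetric, vanishes exactly when p₁ = p₂, and satisfies the triangle inequality. -/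
open WeakDual

section Aux

lemma sqrt_pos_of_ne (a b : ℂ) (h : ¬(a = 0 ∧ b = 0)) :
    0 < Real.sqrt (‖a‖^2 + ‖b‖^2) := by
  rw [Real.sqrt_pos]
  rcases not_and_or.mp h with h | h
  · have : 0 < ‖a‖ := norm_pos_iff.mpr h
    positivity
  · have : 0 < ‖b‖ := norm_pos_iff.mpr h
    positivity

/-- Real Cauchy–Schwarz in dimension 2, stated for norms. -/
lemma cs2norm (a b c d : ℂ) :
    ‖a‖*‖c‖ + ‖b‖*‖d‖ ≤ Real.sqrt (‖a‖^2+‖b‖^2) * Real.sqrt (‖c‖^2+‖d‖^2) := by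
  have hP := Real.sq_sqrt (by positivity : (0:ℝ) ≤ ‖a‖^2+‖b‖^2)
  have hQ := Real.sq_sqrt (by positivity : (0:ℝ) ≤ ‖c‖^2+‖d‖^2)
  have hP0 := Real.sqrt_nonneg (‖a‖^2+‖b‖^2)
  have hQ0 := Real.sqrt_nonneg (‖c‖^2+‖d‖^2)
  nlinarith [sq_nonneg (‖a‖*‖d‖ - ‖b‖*‖c‖), mul_nonneg hP0 hQ0, norm_nonneg a,
    norm_nonneg b, norm_nonneg c, norm_nonneg d,
    sq_nonneg (Real.sqrt (‖a‖^2+‖b‖^2) * Real.sqrt (‖c‖^2+‖d‖^2) - (‖a‖*‖c‖+‖b‖*‖d‖)),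
    mul_nonneg (mul_nonneg (norm_nonneg a) (norm_nonneg c))
      (mul_nonneg (norm_nonneg b) (norm_nonneg d))]

/-- Lagrange-type bound on the numerator. -/
lemma lagrange (a b c d : ℂ) :
    ‖a*d - c*b‖ ≤ Real.sqrt (‖a‖^2+‖b‖^2) * Real.sqrt (‖c‖^2+‖d‖^2) := by
  calc ‖a*d - c*b‖ ≤ ‖a*d‖ + ‖c*b‖ := norm_sub_le _ _
    _ = ‖a‖*‖d‖ + ‖b‖*‖c‖ := by rw [norm_mul, norm_mul]; ring
    _ ≤ Real.sqrt (‖a‖^2+‖b‖^2) * Real.sqrt (‖d‖^2+‖c‖^2) := cs2norm a b d c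
    _ = _ := by rw [add_comm (‖d‖^2)]

/-- Pointwise well-definedness of the chordal distance: proportional nonzero
vectors have the same chordal distance to any third vector. -/
lemma chordal_welldef (a b a' b' c d : ℂ) (hv : ¬(a = 0 ∧ b = 0))
    (hv' : ¬(a' = 0 ∧ b' = 0)) (h : a * b' = a' * b) :
    ‖a*d - c*b‖ / (Real.sqrt (‖a‖^2+‖b‖^2) * Real.sqrt (‖c‖^2+‖d‖^2)) =
    ‖a'*d - c*b'‖ / (Real.sqrt (‖a'‖^2+‖b'‖^2) * Real.sqrt (‖c‖^2+‖d‖^2)) := by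
  set A := ‖a*d - c*b‖ with hA
  set B := ‖a'*d - c*b'‖ with hB
  set P := Real.sqrt (‖a‖^2+‖b‖^2) with hPdef
  set P' := Real.sqrt (‖a'‖^2+‖b'‖^2) with hP'def
  set Q := Real.sqrt (‖c‖^2+‖d‖^2) with hQdef
  have hP : 0 < P := sqrt_pos_of_ne a b hv
  have hP' : 0 < P' := sqrt_pos_of_ne a' b' hv'
  have h1 : a' * (a*d - c*b) = a * (a'*d - c*b') := by linear_combination c * h
  have h2 : b' * (a*d - c*b) = b * (a'*d - c*b') := by linear_combination d * h
  have e1 : ‖a'‖ * A = ‖a‖ * B := by rw [hA, hB, ← norm_mul, ← norm_mul, h1]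
  have e2 : ‖b'‖ * A = ‖b‖ * B := by rw [hA, hB, ← norm_mul, ← norm_mul, h2]
  have hPsq : P^2 = ‖a‖^2+‖b‖^2 := Real.sq_sqrt (by positivity)
  have hP'sq : P'^2 = ‖a'‖^2+‖b'‖^2 := Real.sq_sqrt (by positivity)
  have hsq : (A*P')^2 = (B*P)^2 := by
    calc (A*P')^2 = (‖a'‖*A)^2 + (‖b'‖*A)^2 := by rw [mul_pow, hP'sq]; ring
      _ = (‖a‖*B)^2 + (‖b‖*B)^2 := by rw [e1, e2]
      _ = (B*P)^2 := by rw [mul_pow B P, hPsq]; ring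
  have key : A * P' = B * P := by
    have := congrArg Real.sqrt hsq
    rwa [Real.sqrt_sq (by positivity), Real.sqrt_sq (by positivity)] at this
  rcases eq_or_lt_of_le (Real.sqrt_nonneg (‖c‖^2+‖d‖^2) : (0:ℝ) ≤ Q) with hQ | hQ
  · simp [show Q = 0 from hQdef.trans hQ.symm]
  · rw [div_eq_div_iff (by positivity) (by positivity)]
    nlinarith [key]

/-- Pointwise triangle inequality for the chordal distance on nonzero vectors
in `ℂ²`. -/
lemma chordal_triangle (a₁ b₁ a₂ b₂ a₃ b₃ : ℂ)
    (h1 : ¬(a₁ = 0 ∧ b₁ = 0)) (h2 : ¬(a₂ = 0 ∧ b₂ = 0)) (h3 : ¬(a₃ = 0 ∧ b₃ = 0)) :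
    ‖a₁*b₂ - a₂*b₁‖ / (Real.sqrt (‖a₁‖^2+‖b₁‖^2) * Real.sqrt (‖a₂‖^2+‖b₂‖^2)) ≤
    ‖a₁*b₃ - a₃*b₁‖ / (Real.sqrt (‖a₁‖^2+‖b₁‖^2) * Real.sqrt (‖a₃‖^2+‖b₃‖^2)) +
    ‖a₃*b₂ - a₂*b₃‖ / (Real.sqrt (‖a₃‖^2+‖b₃‖^2) * Real.sqrt (‖a₂‖^2+‖b₂‖^2)) := by
  have innerCS : ∀ a b c d : ℂ, ‖a * (starRingEnd ℂ) c + b * (starRingEnd ℂ) d‖ ≤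
      Real.sqrt (‖a‖^2+‖b‖^2) * Real.sqrt (‖c‖^2+‖d‖^2) := by
    intro a b c d
    calc ‖a * (starRingEnd ℂ) c + b * (starRingEnd ℂ) d‖
        ≤ ‖a * (starRingEnd ℂ) c‖ + ‖b * (starRingEnd ℂ) d‖ := norm_add_le _ _
      _ = ‖a‖*‖c‖ + ‖b‖*‖d‖ := by simp [norm_mul]
      _ ≤ _ := cs2norm a b c d
  set N1 := Real.sqrt (‖a₁‖^2+‖b₁‖^2) with hN1def
  set N2 := Real.sqrt (‖a₂‖^2+‖b₂‖^2) with hN2def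
  set N3 := Real.sqrt (‖a₃‖^2+‖b₃‖^2) with hN3def
  have hN1 : 0 < N1 := sqrt_pos_of_ne _ _ h1
  have hN2 : 0 < N2 := sqrt_pos_of_ne _ _ h2
  have hN3 : 0 < N3 := sqrt_pos_of_ne _ _ h3
  have hN3sq : N3 * N3 = ‖a₃‖^2 + ‖b₃‖^2 := Real.mul_self_sqrt (by positivity)
  have hid : (a₁*b₂ - a₂*b₁) * (a₃ * (starRingEnd ℂ) a₃ + b₃ * (starRingEnd ℂ) b₃) =
      (a₁*b₃ - a₃*b₁) * (a₂ * (starRingEnd ℂ) a₃ + b₂ * (starRingEnd ℂ) b₃) +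
      (a₃*b₂ - a₂*b₃) * (a₁ * (starRingEnd ℂ) a₃ + b₁ * (starRingEnd ℂ) b₃) := by
    ring
  have hconj : ‖a₃ * (starRingEnd ℂ) a₃ + b₃ * (starRingEnd ℂ) b₃‖ = ‖a₃‖^2 + ‖b₃‖^2 := by
    rw [Complex.mul_conj', Complex.mul_conj']
    rw [← Complex.ofReal_pow, ← Complex.ofReal_pow, ← Complex.ofReal_add,
      Complex.norm_real]
    exact abs_of_nonneg (by positivity)
  have key : ‖a₁*b₂ - a₂*b₁‖ * (N3*N3) ≤
      ‖a₁*b₃ - a₃*b₁‖ * (N2*N3) + ‖a₃*b₂ - a₂*b₃‖ * (N1*N3) := by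
    calc ‖a₁*b₂ - a₂*b₁‖ * (N3*N3)
        = ‖(a₁*b₂ - a₂*b₁) * (a₃ * (starRingEnd ℂ) a₃ + b₃ * (starRingEnd ℂ) b₃)‖ := by
          rw [norm_mul, hconj, hN3sq]
      _ = ‖(a₁*b₃ - a₃*b₁) * (a₂ * (starRingEnd ℂ) a₃ + b₂ * (starRingEnd ℂ) b₃) +
          (a₃*b₂ - a₂*b₃) * (a₁ * (starRingEnd ℂ) a₃ + b₁ * (starRingEnd ℂ) b₃)‖ := by
          rw [hid]
      _ ≤ ‖(a₁*b₃ - a₃*b₁)‖ * ‖a₂ * (starRingEnd ℂ) a₃ + b₂ * (starRingEnd ℂ) b₃‖ +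
          ‖(a₃*b₂ - a₂*b₃)‖ * ‖a₁ * (starRingEnd ℂ) a₃ + b₁ * (starRingEnd ℂ) b₃‖ := by
          refine (norm_add_le _ _).trans ?_
          rw [norm_mul, norm_mul]
      _ ≤ _ := by
          gcongr
          · exact innerCS a₂ b₂ a₃ b₃
          · exact innerCS a₁ b₁ a₃ b₃
  rw [div_add_div _ _ (by positivity) (by positivity),
    div_le_div_iff₀ (by positivity) (by positivity)]
  nlinarith [mul_le_mul_of_nonneg_right key (mul_pos hN1 hN2).le, mul_pos hN1 hN2,
    mul_pos hN2 hN3, mul_pos hN1 hN3]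

end Aux

/-- The generalized chordal distance between (representatives of) two plants
`p₁ = n₁/d₁`, `p₂ = n₂/d₂` over `R ⊆ S`, defined as the supremum over the
maximal ideal space (character space) of `S` of the pointwise chordal distance
of the Gelfand transforms. -/
noncomputable def genChordal {R S : Type*} [CommRing R]
    [NormedCommRing S] [NormedAlgebra ℂ S] [CompleteSpace S]
    (ι : R →+* S) (n₁ d₁ n₂ d₂ : R) : ℝ :=
  ⨆ φ : characterSpace ℂ S,
    ‖φ (ι n₁) * φ (ι d₂) - φ (ι n₂) * φ (ι d₁)‖ /
      (Real.sqrt (‖φ (ι n₁)‖ ^ 2 + ‖φ (ι d₁)‖ ^ 2) *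
        Real.sqrt (‖φ (ι n₂)‖ ^ 2 + ‖φ (ι d₂)‖ ^ 2))

/-- `(n, d)` is a coprime factorization (of `n/d`) over `R`: `d ≠ 0` and a
Bézout identity `nx + dy = 1` holds. -/
def IsCoprimeFactorization {R : Type*} [CommRing R] (n d : R) : Prop :=
  d ≠ 0 ∧ ∃ x y : R, n * x + d * y = 1

/-- Let `R` be an integral domain embedded as a full subring of a complex
commutative unital semisimple Banach algebra `S`.  Then the generalized chordal
distance `κ` is a metric on the set of coprime factorizable plants over `R`:
it is independent of the choice of coprime factorizations, nonnegative,
symmetric, vanishes exactly when the plants coincide (`n₁d₂ = n₂d₁`), and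
satisfies the triangle inequality. -/
theorem genChordal_is_metric {R S : Type*} [CommRing R] [IsDomain R]
    [NormedCommRing S] [NormedAlgebra ℂ S] [CompleteSpace S]
    (hsemi : ∀ s : S, (∀ φ : characterSpace ℂ S, φ s = 0) → s = 0)
    (ι : R →+* S) (hinj : Function.Injective ι)
    (hfull : ∀ x : R, IsUnit (ι x) → IsUnit x) :
    (∀ n₁ d₁ nt₁ dt₁ n₂ d₂ : R, IsCoprimeFactorization n₁ d₁ →
        IsCoprimeFactorization nt₁ dt₁ → IsCoprimeFactorization n₂ d₂ →
        n₁ * dt₁ = nt₁ * d₁ →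
        genChordal ι n₁ d₁ n₂ d₂ = genChordal ι nt₁ dt₁ n₂ d₂) ∧
    (∀ n₁ d₁ n₂ d₂ : R, IsCoprimeFactorization n₁ d₁ →
        IsCoprimeFactorization n₂ d₂ → 0 ≤ genChordal ι n₁ d₁ n₂ d₂) ∧
    (∀ n₁ d₁ n₂ d₂ : R, IsCoprimeFactorization n₁ d₁ →
        IsCoprimeFactorization n₂ d₂ →
        genChordal ι n₁ d₁ n₂ d₂ = genChordal ι n₂ d₂ n₁ d₁) ∧
    (∀ n₁ d₁ n₂ d₂ : R, IsCoprimeFactorization n₁ d₁ →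
        IsCoprimeFactorization n₂ d₂ →
        (genChordal ι n₁ d₁ n₂ d₂ = 0 ↔ n₁ * d₂ = n₂ * d₁)) ∧
    (∀ n₁ d₁ n₂ d₂ n₃ d₃ : R, IsCoprimeFactorization n₁ d₁ →
        IsCoprimeFactorization n₂ d₂ → IsCoprimeFactorization n₃ d₃ →
        genChordal ι n₁ d₁ n₂ d₂ ≤
          genChordal ι n₁ d₁ n₃ d₃ + genChordal ι n₃ d₃ n₂ d₂) := by
  -- the character space is nonempty
  have hne : Nonempty (characterSpace ℂ S) := by
    by_contra h
    have h1 : (1:S) = 0 := hsemi 1 (fun φ => absurd ⟨φ⟩ h)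
    have : ι 1 = ι 0 := by simp [h1]
    exact one_ne_zero (hinj this)
  -- coprime pairs have nonvanishing Gelfand transforms
  have hnv : ∀ n d : R, IsCoprimeFactorization n d →
      ∀ φ : characterSpace ℂ S, ¬(φ (ι n) = 0 ∧ φ (ι d) = 0) := by
    rintro n d ⟨-, x, y, hxy⟩ φ ⟨h1, h2⟩
    have := congrArg (fun r : R => φ (ι r)) hxy
    simp only [map_add, map_mul, map_one, h1, h2, zero_mul, add_zero] at this
    exact one_ne_zero this.symm
  -- each term of the supremum is bounded above by 1
  have hbdd : ∀ n₁ d₁ n₂ d₂ : R, IsCoprimeFactorization n₁ d₁ →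
      IsCoprimeFactorization n₂ d₂ →
      BddAbove (Set.range fun φ : characterSpace ℂ S =>
        ‖φ (ι n₁) * φ (ι d₂) - φ (ι n₂) * φ (ι d₁)‖ /
          (Real.sqrt (‖φ (ι n₁)‖ ^ 2 + ‖φ (ι d₁)‖ ^ 2) *
            Real.sqrt (‖φ (ι n₂)‖ ^ 2 + ‖φ (ι d₂)‖ ^ 2))) := by
    intro n₁ d₁ n₂ d₂ hc1 hc2
    refine ⟨1, ?_⟩
    rintro x ⟨φ, rfl⟩
    have hden : 0 < Real.sqrt (‖φ (ι n₁)‖ ^ 2 + ‖φ (ι d₁)‖ ^ 2) *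
        Real.sqrt (‖φ (ι n₂)‖ ^ 2 + ‖φ (ι d₂)‖ ^ 2) :=
      mul_pos (sqrt_pos_of_ne _ _ (hnv _ _ hc1 φ)) (sqrt_pos_of_ne _ _ (hnv _ _ hc2 φ))
    exact div_le_one_of_le₀ (lagrange _ _ _ _) hden.le
  refine ⟨?_, ?_, ?_, ?_, ?_⟩
  · -- well-definedness
    intro n₁ d₁ nt₁ dt₁ n₂ d₂ hc1 hct1 hc2 heq
    unfold genChordal
    congr 1
    funext φ
    refine chordal_welldef _ _ _ _ _ _ (hnv _ _ hc1 φ) (hnv _ _ hct1 φ) ?_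
    have := congrArg (fun r : R => φ (ι r)) heq
    simpa only [map_mul] using this
  · -- nonnegativity
    intro n₁ d₁ n₂ d₂ _ _
    exact Real.iSup_nonneg fun φ => by positivity
  · -- symmetry
    intro n₁ d₁ n₂ d₂ _ _
    unfold genChordal
    congr 1
    funext φ
    rw [norm_sub_rev, mul_comm (Real.sqrt (‖φ (ι n₁)‖ ^ 2 + ‖φ (ι d₁)‖ ^ 2))]
  · -- vanishing iff equal plants
    intro n₁ d₁ n₂ d₂ hc1 hc2
    constructor
    · intro hsup
      have hterm : ∀ φ : characterSpace ℂ S,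
          ‖φ (ι n₁) * φ (ι d₂) - φ (ι n₂) * φ (ι d₁)‖ /
            (Real.sqrt (‖φ (ι n₁)‖ ^ 2 + ‖φ (ι d₁)‖ ^ 2) *
              Real.sqrt (‖φ (ι n₂)‖ ^ 2 + ‖φ (ι d₂)‖ ^ 2)) = 0 := by
        intro φ
        have hle := le_ciSup (hbdd n₁ d₁ n₂ d₂ hc1 hc2) φ
        rw [show (⨆ φ : characterSpace ℂ S,
            ‖φ (ι n₁) * φ (ι d₂) - φ (ι n₂) * φ (ι d₁)‖ /
              (Real.sqrt (‖φ (ι n₁)‖ ^ 2 + ‖φ (ι d₁)‖ ^ 2) *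
                Real.sqrt (‖φ (ι n₂)‖ ^ 2 + ‖φ (ι d₂)‖ ^ 2))) = 0 from hsup] at hle
        refine le_antisymm hle (by positivity)
      have hzero : ∀ φ : characterSpace ℂ S, φ (ι (n₁ * d₂ - n₂ * d₁)) = 0 := by
        intro φ
        have hden : 0 < Real.sqrt (‖φ (ι n₁)‖ ^ 2 + ‖φ (ι d₁)‖ ^ 2) *
            Real.sqrt (‖φ (ι n₂)‖ ^ 2 + ‖φ (ι d₂)‖ ^ 2) :=
          mul_pos (sqrt_pos_of_ne _ _ (hnv _ _ hc1 φ)) (sqrt_pos_of_ne _ _ (hnv _ _ hc2 φ))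
        have := hterm φ
        rw [div_eq_zero_iff] at this
        rcases this with h | h
        · simp only [map_sub, map_mul]
          exact norm_eq_zero.mp h
        · exact absurd h hden.ne'
      have : ι (n₁ * d₂ - n₂ * d₁) = 0 := hsemi _ hzero
      have : ι (n₁ * d₂ - n₂ * d₁) = ι 0 := by simpa using this
      exact sub_eq_zero.mp (hinj this)
    · intro heq
      have hterm : ∀ φ : characterSpace ℂ S,
          ‖φ (ι n₁) * φ (ι d₂) - φ (ι n₂) * φ (ι d₁)‖ /
            (Real.sqrt (‖φ (ι n₁)‖ ^ 2 + ‖φ (ι d₁)‖ ^ 2) *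
              Real.sqrt (‖φ (ι n₂)‖ ^ 2 + ‖φ (ι d₂)‖ ^ 2)) = 0 := by
        intro φ
        have : φ (ι n₁) * φ (ι d₂) - φ (ι n₂) * φ (ι d₁) = 0 := by
          have := congrArg (fun r : R => φ (ι r)) heq
          simp only [map_mul] at this
          rw [this, sub_self]
        rw [this, norm_zero, zero_div]
      unfold genChordal
      rw [funext hterm]
      exact ciSup_const
  · -- triangle inequality
    intro n₁ d₁ n₂ d₂ n₃ d₃ hc1 hc2 hc3
    unfold genChordal
    refine ciSup_le fun φ => ?_
    calc ‖φ (ι n₁) * φ (ι d₂) - φ (ι n₂) * φ (ι d₁)‖ /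
          (Real.sqrt (‖φ (ι n₁)‖ ^ 2 + ‖φ (ι d₁)‖ ^ 2) *
            Real.sqrt (‖φ (ι n₂)‖ ^ 2 + ‖φ (ι d₂)‖ ^ 2))
        ≤ ‖φ (ι n₁) * φ (ι d₃) - φ (ι n₃) * φ (ι d₁)‖ /
            (Real.sqrt (‖φ (ι n₁)‖ ^ 2 + ‖φ (ι d₁)‖ ^ 2) *
              Real.sqrt (‖φ (ι n₃)‖ ^ 2 + ‖φ (ι d₃)‖ ^ 2)) +
          ‖φ (ι n₃) * φ (ι d₂) - φ (ι n₂) * φ (ι d₃)‖ /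
            (Real.sqrt (‖φ (ι n₃)‖ ^ 2 + ‖φ (ι d₃)‖ ^ 2) *
              Real.sqrt (‖φ (ι n₂)‖ ^ 2 + ‖φ (ι d₂)‖ ^ 2)) :=
        chordal_triangle _ _ _ _ _ _ (hnv _ _ hc1 φ) (hnv _ _ hc2 φ) (hnv _ _ hc3 φ)
      _ ≤ _ :=
        add_le_add (le_ciSup (hbdd n₁ d₁ n₃ d₃ hc1 hc3) φ)
          (le_ciSup (hbdd n₃ d₃ n₂ d₂ hc3 hc2) φ)
end

section
/- Let R be a commutative integral domain with 1 embedded as a full subring of a complex commutative unital semisimple Banach algebra S. Suppose p₀ = n₀/d₀ is a coprime factorization over R and c ∈ R stabilizes p₀, meaning g₀ := p₀/(1 - c p₀) ∈ R and 1/(1 - c p₀) ∈ R. Then d₀ - n₀ c is invertible in R, and hence for every character φ of S, φ(d₀) - φ(n₀)·φ(c) ≠ 0. -/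
open WeakDual

/-- Let `R` be an integral domain embedded as a full subring of a complex
commutative unital semisimple Banach algebra `S`.  If `p₀ = n₀/d₀` is a coprime
factorization over `R` and `c ∈ R` stabilizes `p₀`, i.e. both
`1/(1-cp₀) = d₀/(d₀-n₀c)` and `g₀ = p₀/(1-cp₀) = n₀/(d₀-n₀c)` lie in `R`
(witnessed by `u` and `v`), then `d₀ - n₀c` is invertible in `R`, and hence
`φ(d₀) - φ(n₀)φ(c) ≠ 0` for every character `φ` of `S`. -/
theorem denominator_unit_and_characters {R S : Type*} [CommRing R] [IsDomain R]
    [NormedCommRing S] [NormedAlgebra ℂ S] [CompleteSpace S]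
    (hsemi : ∀ s : S, (∀ φ : characterSpace ℂ S, φ s = 0) → s = 0)
    (ι : R →+* S) (hinj : Function.Injective ι)
    (hfull : ∀ x : R, IsUnit (ι x) → IsUnit x)
    (n₀ d₀ c x y u v : R) (hd₀ : d₀ ≠ 0) (hxy : n₀ * x + d₀ * y = 1)
    (hu : u * (d₀ - n₀ * c) = d₀) (hv : v * (d₀ - n₀ * c) = n₀) :
    IsUnit (d₀ - n₀ * c) ∧
      ∀ φ : characterSpace ℂ S, φ (ι d₀) - φ (ι n₀) * φ (ι c) ≠ 0 := by
  have hunit : IsUnit (d₀ - n₀ * c) := by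
    refine IsUnit.of_mul_eq_one (x * v + y * u) ?_
    linear_combination x * hv + y * hu + hxy
  refine ⟨hunit, fun φ => ?_⟩
  have h1 : IsUnit (φ (ι (d₀ - n₀ * c))) := (hunit.map ι).map φ
  have h2 : φ (ι (d₀ - n₀ * c)) = φ (ι d₀) - φ (ι n₀) * φ (ι c) := by
    simp [map_sub, map_mul]
  rw [h2] at h1
  exact h1.ne_zero
end

section
/- (Abstract robustness of strong stabilizability.) Let R be a commutative integral domain with 1 that is a full subring of a complex commutative unital semisimple Banach algebra S. Let p₀, p be plants in the field of fractions of R admitting coprime factorizations over R, and let c ∈ R be such that g₀ := p₀/(1 - c p₀) ∈ R and c stabilizes p₀. Set k := ‖c‖∞ := sup over characters φ of |φ(c)| and g := ‖g₀‖∞. If the generalized chordal distance κ(p, p₀) < (1/3)·min{1, 1/g, 1/(k(1+kg))}, then p is also stabilized by c (i.e., with coprime factorization p = n/d, the element d - nc is invertible in R). -/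
open WeakDual

/-- The supremum norm `‖x‖∞` of `x ∈ R`: the supremum of `|φ(ι x)|` over the
maximal ideal space (character space) of `S`. -/
noncomputable def supNorm {R S : Type*} [CommRing R]
    [NormedCommRing S] [NormedAlgebra ℂ S] [CompleteSpace S]
    (ι : R →+* S) (x : R) : ℝ :=
  ⨆ φ : characterSpace ℂ S, ‖φ (ι x)‖

/-- The "Pythagorean" identity `|⟨(a,b),(a₀,b₀)⟩|² + |det|² = ‖(a,b)‖²·‖(a₀,b₀)‖²`. -/
lemma key_identity (a b a₀ b₀ : ℂ) :
    Complex.normSq (a * (starRingEnd ℂ) a₀ + b * (starRingEnd ℂ) b₀) +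
      Complex.normSq (a * b₀ - a₀ * b) =
    (Complex.normSq a + Complex.normSq b) * (Complex.normSq a₀ + Complex.normSq b₀) := by
  simp only [Complex.normSq_apply, Complex.add_re, Complex.add_im, Complex.mul_re, Complex.mul_im,
    Complex.sub_re, Complex.sub_im, Complex.conj_re, Complex.conj_im]
  ring

lemma normSq_eq_norm_sq (z : ℂ) : Complex.normSq z = ‖z‖ ^ 2 := by
  rw [Complex.sq_norm]

/-- Cauchy–Schwarz: each term of the generalized chordal distance is at most `1`. -/
lemma chordal_term_le_one (a b a₀ b₀ : ℂ) :
    ‖a * b₀ - a₀ * b‖ /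
      (Real.sqrt (‖a‖ ^ 2 + ‖b‖ ^ 2) * Real.sqrt (‖a₀‖ ^ 2 + ‖b₀‖ ^ 2)) ≤ 1 := by
  have key := key_identity a b a₀ b₀
  simp only [normSq_eq_norm_sq] at key
  have h1 : ‖a * b₀ - a₀ * b‖ ^ 2 ≤ (‖a‖ ^ 2 + ‖b‖ ^ 2) * (‖a₀‖ ^ 2 + ‖b₀‖ ^ 2) := by
    nlinarith [sq_nonneg ‖a * (starRingEnd ℂ) a₀ + b * (starRingEnd ℂ) b₀‖]
  have h2 : ‖a * b₀ - a₀ * b‖ ≤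
      Real.sqrt ((‖a‖ ^ 2 + ‖b‖ ^ 2) * (‖a₀‖ ^ 2 + ‖b₀‖ ^ 2)) := by
    rw [show ‖a * b₀ - a₀ * b‖ = Real.sqrt (‖a * b₀ - a₀ * b‖ ^ 2) from
      (Real.sqrt_sq (norm_nonneg _)).symm]
    exact Real.sqrt_le_sqrt h1
  rw [Real.sqrt_mul (by positivity)] at h2
  exact div_le_one_of_le₀ h2 (by positivity)

lemma robust_aux_b0 (nb nB na ng K Gn : ℝ) (h : nb ≤ nB + na * ng)
    (hna : na ≤ Gn * nB) (hg : ng ≤ K) (hng : 0 ≤ ng) (hna0 : 0 ≤ na)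
    (hK : 0 ≤ K) (hGn : 0 ≤ Gn) (hB : 0 ≤ nB) : nb ≤ (1 + K * Gn) * nB := by
  nlinarith [mul_le_mul hna hg hng (by positivity : (0:ℝ) ≤ Gn * nB)]

lemma robust_aux_bound (m Gn K rr : ℝ) (hrr : 0 < rr)
    (hmGn : m * Gn ≤ 1) (hmK : m * (K * (1 + K * Gn)) ≤ 1) :
    1 / 3 * m * rr * (Gn + K * (1 + K * Gn)) ≤ 2 / 3 * rr := by
  nlinarith [mul_le_mul_of_nonneg_left hmGn hrr.le, mul_le_mul_of_nonneg_left hmK hrr.le]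

lemma robust_aux_final (x y z : ℝ) (hz : 0 < z) (hx : 0 ≤ x) (hy : 0 ≤ y)
    (hxy : x ^ 2 + y ^ 2 = z ^ 2) (hx' : x < 2 / 3 * z) (hy' : y < 1 / 3 * z) : False := by
  nlinarith [mul_self_nonneg x, mul_self_nonneg y]

set_option maxHeartbeats 1000000

/-- Abstract robustness of strong stabilizability.  Let `R` be an integral
domain embedded as a full subring of a complex commutative unital semisimple
Banach algebra `S`.  Let `p₀ = n₀/d₀` and `p = n/d` be coprime factorizable
plants over `R`, and let `c ∈ R` stabilize `p₀`, i.e. `d₀ - n₀c` is invertible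
in `R` (equivalently all closed-loop transfer functions lie in `R`), with
closed-loop gain `g₀ = p₀/(1-cp₀) = n₀/(d₀-n₀c) ∈ R`.  Set `k := ‖c‖∞` and
`g := ‖g₀‖∞`.  If `κ(p,p₀) < (1/3)·min{1, 1/g, 1/(k(1+kg))}`, then `p` is
also stabilized by `c`, i.e. `d - nc` is invertible in `R`. -/
theorem robust_strong_stabilization {R S : Type*} [CommRing R] [IsDomain R]
    [NormedCommRing S] [NormedAlgebra ℂ S] [CompleteSpace S]
    (hsemi : ∀ s : S, (∀ φ : characterSpace ℂ S, φ s = 0) → s = 0)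
    (ι : R →+* S) (hinj : Function.Injective ι)
    (hfull : ∀ x : R, IsUnit (ι x) → IsUnit x)
    (n₀ d₀ n d c g₀ : R)
    (hd₀ : d₀ ≠ 0) (hcop₀ : ∃ x y : R, n₀ * x + d₀ * y = 1)
    (hd : d ≠ 0) (hcop : ∃ x y : R, n * x + d * y = 1)
    (hstab₀ : IsUnit (d₀ - n₀ * c))
    (hg₀ : g₀ * (d₀ - n₀ * c) = n₀)
    (hκ : genChordal ι n d n₀ d₀ <
      1 / 3 * min 1 (min (1 / supNorm ι g₀)
        (1 / (supNorm ι c * (1 + supNorm ι c * supNorm ι g₀))))) :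
    IsUnit (d - n * c) := by
  -- uniform bound on characters
  have hbd : ∀ x : R, BddAbove (Set.range fun ψ : characterSpace ℂ S => ‖ψ (ι x)‖) := by
    intro x
    refine ⟨‖(1 : S)‖ * ‖ι x‖, ?_⟩
    rintro _ ⟨ψ, rfl⟩
    calc ‖ψ (ι x)‖ ≤ ‖toStrongDual (ψ : WeakDual ℂ S)‖ * ‖ι x‖ :=
          ContinuousLinearMap.le_opNorm _ _
      _ ≤ ‖(1 : S)‖ * ‖ι x‖ := by
          gcongr
          exact CharacterSpace.norm_le_norm_one ψ
  apply hfull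
  by_contra hu
  obtain ⟨φ, hφ⟩ := WeakDual.CharacterSpace.exists_apply_eq_zero hu
  set a : ℂ := φ (ι n) with ha_def
  set b : ℂ := φ (ι d) with hb_def
  set a₀ : ℂ := φ (ι n₀) with ha₀_def
  set b₀ : ℂ := φ (ι d₀) with hb₀_def
  set γ : ℂ := φ (ι c) with hγ_def
  set G : ℂ := φ (ι g₀) with hG_def
  set K : ℝ := supNorm ι c with hK_def
  set Gn : ℝ := supNorm ι g₀ with hGn_def
  -- basic relations at the character φ
  have hb' : b = a * γ := by
    have h : φ (ι (d - n * c)) = φ (ι d) - φ (ι n) * φ (ι c) := by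
      rw [map_sub, map_mul, map_sub, map_mul]
    rw [hφ] at h
    have := h.symm
    rw [← ha_def, ← hb_def, ← hγ_def] at this
    exact sub_eq_zero.mp this
  have hGid : G * (b₀ - a₀ * γ) = a₀ := by
    have h := congrArg (fun z : R => φ (ι z)) hg₀
    simp only [map_mul, map_sub] at h
    rw [← ha₀_def, ← hb₀_def, ← hγ_def, ← hG_def] at h
    exact h
  have hden : b₀ - a₀ * γ ≠ 0 := by
    have h1 : IsUnit (φ (ι (d₀ - n₀ * c))) := (hstab₀.map ι).map φ
    rw [map_sub, map_mul, map_sub, map_mul] at h1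
    rw [← ha₀_def, ← hb₀_def, ← hγ_def] at h1
    exact h1.ne_zero
  have hBpos : 0 < ‖b₀ - a₀ * γ‖ := norm_pos_iff.mpr hden
  -- positivity of the denominators
  have hr2 : 0 < ‖a‖ ^ 2 + ‖b‖ ^ 2 := by
    obtain ⟨x, y, hxy⟩ := hcop
    have h1 : a * φ (ι x) + b * φ (ι y) = 1 := by
      have h := congrArg (fun z : R => φ (ι z)) hxy
      simp only [map_add, map_mul, map_one] at h
      rw [← ha_def, ← hb_def] at h
      exact h
    rcases eq_or_ne a 0 with ha0 | ha0
    · rcases eq_or_ne b 0 with hb0 | hb0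
      · rw [ha0, hb0] at h1; simp at h1
      · have h2 : 0 < ‖b‖ ^ 2 := pow_pos (norm_pos_iff.mpr hb0) 2
        have := sq_nonneg ‖a‖
        linarith
    · have h2 : 0 < ‖a‖ ^ 2 := pow_pos (norm_pos_iff.mpr ha0) 2
      have := sq_nonneg ‖b‖
      linarith
  have hr₀2 : 0 < ‖a₀‖ ^ 2 + ‖b₀‖ ^ 2 := by
    obtain ⟨x, y, hxy⟩ := hcop₀
    have h1 : a₀ * φ (ι x) + b₀ * φ (ι y) = 1 := by
      have h := congrArg (fun z : R => φ (ι z)) hxy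
      simp only [map_add, map_mul, map_one] at h
      rw [← ha₀_def, ← hb₀_def] at h
      exact h
    rcases eq_or_ne a₀ 0 with ha0 | ha0
    · rcases eq_or_ne b₀ 0 with hb0 | hb0
      · rw [ha0, hb0] at h1; simp at h1
      · have h2 : 0 < ‖b₀‖ ^ 2 := pow_pos (norm_pos_iff.mpr hb0) 2
        have := sq_nonneg ‖a₀‖
        linarith
    · have h2 : 0 < ‖a₀‖ ^ 2 := pow_pos (norm_pos_iff.mpr ha0) 2
      have := sq_nonneg ‖b₀‖
      linarith
  set r : ℝ := Real.sqrt (‖a‖ ^ 2 + ‖b‖ ^ 2) with hr_def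
  set r₀ : ℝ := Real.sqrt (‖a₀‖ ^ 2 + ‖b₀‖ ^ 2) with hr₀_def
  have hrpos : 0 < r := Real.sqrt_pos.mpr hr2
  have hr₀pos : 0 < r₀ := Real.sqrt_pos.mpr hr₀2
  have hr_sq : r ^ 2 = ‖a‖ ^ 2 + ‖b‖ ^ 2 := Real.sq_sqrt hr2.le
  have hr₀_sq : r₀ ^ 2 = ‖a₀‖ ^ 2 + ‖b₀‖ ^ 2 := Real.sq_sqrt hr₀2.le
  have hrr₀ : 0 < r * r₀ := mul_pos hrpos hr₀pos
  -- the chordal distance at φ is a lower bound for the supremum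
  have hκφ : ‖a * b₀ - a₀ * b‖ / (r * r₀) ≤ genChordal ι n d n₀ d₀ := by
    have hbdd : BddAbove (Set.range fun ψ : characterSpace ℂ S =>
        ‖ψ (ι n) * ψ (ι d₀) - ψ (ι n₀) * ψ (ι d)‖ /
          (Real.sqrt (‖ψ (ι n)‖ ^ 2 + ‖ψ (ι d)‖ ^ 2) *
            Real.sqrt (‖ψ (ι n₀)‖ ^ 2 + ‖ψ (ι d₀)‖ ^ 2))) := by
      refine ⟨1, ?_⟩
      rintro _ ⟨ψ, rfl⟩
      exact chordal_term_le_one _ _ _ _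
    exact le_ciSup hbdd φ
  have hκφ0 : 0 ≤ ‖a * b₀ - a₀ * b‖ / (r * r₀) := by positivity
  -- positivity of the bound and of k, g
  have hε : 0 < 1 / 3 * min 1 (min (1 / Gn) (1 / (K * (1 + K * Gn)))) :=
    lt_of_le_of_lt (hκφ0.trans hκφ) hκ
  have hmin : 0 < min 1 (min (1 / Gn) (1 / (K * (1 + K * Gn)))) := by linarith
  have hGnpos : 0 < Gn := by
    have h := (lt_min_iff.mp (lt_min_iff.mp hmin).2).1
    exact one_div_pos.mp h
  have hKprod : 0 < K * (1 + K * Gn) := by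
    have h := (lt_min_iff.mp (lt_min_iff.mp hmin).2).2
    exact one_div_pos.mp h
  have hγK : ‖γ‖ ≤ K := le_ciSup (hbd c) φ
  have hGg : ‖G‖ ≤ Gn := le_ciSup (hbd g₀) φ
  have hK0 : 0 ≤ K := (norm_nonneg γ).trans hγK
  have hKpos : 0 < K := by
    rcases hK0.lt_or_eq with h | h
    · exact h
    · rw [← h] at hKprod; simp at hKprod
  -- the determinant/inner-product identity under b = aγ
  set δ : ℂ := a * b₀ - a₀ * b with hδ_def
  set u : ℂ := a * (starRingEnd ℂ) a₀ + b * (starRingEnd ℂ) b₀ with hu_def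
  have h_u_delta : u * (b₀ - a₀ * γ) = δ * ((starRingEnd ℂ) a₀ + γ * (starRingEnd ℂ) b₀) := by
    rw [hu_def, hδ_def, hb']; ring
  have hnormeq : ‖u‖ * ‖b₀ - a₀ * γ‖ = ‖δ‖ * ‖(starRingEnd ℂ) a₀ + γ * (starRingEnd ℂ) b₀‖ := by
    rw [← norm_mul, ← norm_mul, h_u_delta]
  have h3 : ‖(starRingEnd ℂ) a₀ + γ * (starRingEnd ℂ) b₀‖ ≤ ‖a₀‖ + ‖γ‖ * ‖b₀‖ := by
    calc ‖(starRingEnd ℂ) a₀ + γ * (starRingEnd ℂ) b₀‖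
        ≤ ‖(starRingEnd ℂ) a₀‖ + ‖γ * (starRingEnd ℂ) b₀‖ := norm_add_le _ _
      _ = ‖a₀‖ + ‖γ‖ * ‖b₀‖ := by rw [norm_mul, RCLike.norm_conj, RCLike.norm_conj]
  have ha₀_le : ‖a₀‖ ≤ Gn * ‖b₀ - a₀ * γ‖ := by
    calc ‖a₀‖ = ‖G * (b₀ - a₀ * γ)‖ := by rw [hGid]
      _ = ‖G‖ * ‖b₀ - a₀ * γ‖ := norm_mul _ _
      _ ≤ Gn * ‖b₀ - a₀ * γ‖ := mul_le_mul_of_nonneg_right hGg (norm_nonneg _)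
  have hb₀_le : ‖b₀‖ ≤ (1 + K * Gn) * ‖b₀ - a₀ * γ‖ := by
    have heq : b₀ = (b₀ - a₀ * γ) + a₀ * γ := by ring
    have h := norm_add_le (b₀ - a₀ * γ) (a₀ * γ)
    rw [← heq, norm_mul] at h
    exact robust_aux_b0 ‖b₀‖ ‖b₀ - a₀ * γ‖ ‖a₀‖ ‖γ‖ K Gn h ha₀_le hγK (norm_nonneg _)
      (norm_nonneg _) hK0 hGnpos.le (norm_nonneg _)
  have hgb : ‖γ‖ * ‖b₀‖ ≤ K * ((1 + K * Gn) * ‖b₀ - a₀ * γ‖) :=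
    mul_le_mul hγK hb₀_le (norm_nonneg _) hKpos.le
  have h4 : ‖u‖ * ‖b₀ - a₀ * γ‖ ≤ (‖δ‖ * (Gn + K * (1 + K * Gn))) * ‖b₀ - a₀ * γ‖ := by
    rw [hnormeq]
    calc ‖δ‖ * ‖(starRingEnd ℂ) a₀ + γ * (starRingEnd ℂ) b₀‖
        ≤ ‖δ‖ * (‖a₀‖ + ‖γ‖ * ‖b₀‖) := mul_le_mul_of_nonneg_left h3 (norm_nonneg _)
      _ ≤ ‖δ‖ * (Gn * ‖b₀ - a₀ * γ‖ + K * ((1 + K * Gn) * ‖b₀ - a₀ * γ‖)) :=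
          mul_le_mul_of_nonneg_left (add_le_add ha₀_le hgb) (norm_nonneg _)
      _ = (‖δ‖ * (Gn + K * (1 + K * Gn))) * ‖b₀ - a₀ * γ‖ := by ring
  have h5 : ‖u‖ ≤ ‖δ‖ * (Gn + K * (1 + K * Gn)) := le_of_mul_le_mul_right h4 hBpos
  -- the smallness bound on δ
  set m : ℝ := min 1 (min (1 / Gn) (1 / (K * (1 + K * Gn)))) with hm_def
  have hm0 : 0 < m := hmin
  have hm1 : m ≤ 1 := min_le_left _ _
  have hmGn : m * Gn ≤ 1 := by
    have h : m ≤ 1 / Gn := le_trans (min_le_right _ _) (min_le_left _ _)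
    calc m * Gn ≤ (1 / Gn) * Gn := mul_le_mul_of_nonneg_right h hGnpos.le
      _ = 1 := by field_simp
  have hmK : m * (K * (1 + K * Gn)) ≤ 1 := by
    have h : m ≤ 1 / (K * (1 + K * Gn)) := le_trans (min_le_right _ _) (min_le_right _ _)
    calc m * (K * (1 + K * Gn)) ≤ (1 / (K * (1 + K * Gn))) * (K * (1 + K * Gn)) :=
          mul_le_mul_of_nonneg_right h hKprod.le
      _ = 1 := by field_simp
  have hδlt : ‖δ‖ < 1 / 3 * m * (r * r₀) := by
    have hlt : ‖δ‖ / (r * r₀) < 1 / 3 * m := lt_of_le_of_lt hκφ hκ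
    calc ‖δ‖ = (‖δ‖ / (r * r₀)) * (r * r₀) := by field_simp
      _ < (1 / 3 * m) * (r * r₀) := mul_lt_mul_of_pos_right hlt hrr₀
      _ = 1 / 3 * m * (r * r₀) := by ring
  -- Pythagorean identity
  have pyth : ‖u‖ ^ 2 + ‖δ‖ ^ 2 = (r * r₀) ^ 2 := by
    have h := key_identity a b a₀ b₀
    simp only [normSq_eq_norm_sq] at h
    rw [hu_def, hδ_def, mul_pow, hr_sq, hr₀_sq]
    exact h
  -- the two contradictory bounds on ‖u‖
  have hδ' : ‖δ‖ < 1 / 3 * (r * r₀) := by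
    have h1 : 1 / 3 * m * (r * r₀) ≤ 1 / 3 * (r * r₀) := by
      have := mul_le_mul_of_nonneg_right hm1 hrr₀.le
      linarith
    linarith
  have hsumpos : 0 < Gn + K * (1 + K * Gn) := by positivity
  have hu' : ‖u‖ < 2 / 3 * (r * r₀) := by
    have h6 : ‖δ‖ * (Gn + K * (1 + K * Gn)) <
        (1 / 3 * m * (r * r₀)) * (Gn + K * (1 + K * Gn)) :=
      mul_lt_mul_of_pos_right hδlt hsumpos
    have h7 : 1 / 3 * m * (r * r₀) * (Gn + K * (1 + K * Gn)) ≤ 2 / 3 * (r * r₀) :=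
      robust_aux_bound m Gn K (r * r₀) hrr₀ hmGn hmK
    linarith
  exact robust_aux_final ‖u‖ ‖δ‖ (r * r₀) hrr₀ (norm_nonneg _) (norm_nonneg _) pyth hu' hδ'
end

section
/- Let n, d, n₀, d₀, c be complex numbers with (n,d) ≠ (0,0), (n₀,d₀) ≠ (0,0), and suppose d - nc = 0, d = 0, and d₀ - n₀c ≠ 0 with |n₀/(d₀ - n₀c)| ≤ g for some g > 0 and c = 0 forced (since n ≠ 0 and d - nc = 0 with d = 0 gives c = 0). Then the chordal distance |n d₀ - n₀ d| / (√(|n|²+|d|²)·√(|n₀|²+|d₀|²)) ≥ min{ (1/3)·(1/g), 1/3 }. -/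
/-- Pointwise case 1° in the proof of the main robustness theorem: if the
perturbed closed-loop denominator vanishes with `d = 0` (forcing `c = 0`),
then the chordal distance between `(n,d)` and `(n₀,d₀)` is at least
`min ((1/3)·(1/g)) (1/3)`. -/
theorem case_one_estimate (n d n₀ d₀ c : ℂ) (g : ℝ) (hg : 0 < g)
    (hnd : ¬(n = 0 ∧ d = 0)) (hnd₀ : ¬(n₀ = 0 ∧ d₀ = 0))
    (hden : d - n * c = 0) (hd : d = 0) (hden₀ : d₀ - n₀ * c ≠ 0)
    (hg₀ : ‖n₀ / (d₀ - n₀ * c)‖ ≤ g) (hc : c = 0) :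
    ‖n * d₀ - n₀ * d‖ /
        (Real.sqrt (‖n‖ ^ 2 + ‖d‖ ^ 2) * Real.sqrt (‖n₀‖ ^ 2 + ‖d₀‖ ^ 2)) ≥
      min (1 / 3 * (1 / g)) (1 / 3) := by
  subst hd hc
  simp only [mul_zero, sub_zero] at hden₀ hg₀ ⊢
  have hn : n ≠ 0 := fun h => hnd ⟨h, rfl⟩
  have hnn : (0:ℝ) < ‖n‖ := norm_pos_iff.mpr hn
  have hb : (0:ℝ) < ‖d₀‖ := norm_pos_iff.mpr hden₀
  have ha : ‖n₀‖ ≤ g * ‖d₀‖ := by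
    rw [norm_div] at hg₀
    calc ‖n₀‖ = ‖n₀‖ / ‖d₀‖ * ‖d₀‖ := (div_mul_cancel₀ ‖n₀‖ hb.ne').symm
    _ ≤ g * ‖d₀‖ := by exact mul_le_mul_of_nonneg_right hg₀ hb.le
  rw [norm_mul]
  have h1 : Real.sqrt (‖n‖ ^ 2 + ‖(0:ℂ)‖ ^ 2) = ‖n‖ := by
    simp [Real.sqrt_sq hnn.le]
  rw [h1]
  have h2 : Real.sqrt (‖n₀‖ ^ 2 + ‖d₀‖ ^ 2) ≤ (g + 1) * ‖d₀‖ := by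
    rw [show (g + 1) * ‖d₀‖ = Real.sqrt (((g+1) * ‖d₀‖)^2) from
      (Real.sqrt_sq (by positivity)).symm]
    apply Real.sqrt_le_sqrt
    nlinarith [norm_nonneg n₀, sq_nonneg (‖n₀‖ - g * ‖d₀‖)]
  have h2pos : (0:ℝ) < Real.sqrt (‖n₀‖ ^ 2 + ‖d₀‖ ^ 2) := by positivity
  have key : ‖n‖ * ‖d₀‖ / (‖n‖ * Real.sqrt (‖n₀‖ ^ 2 + ‖d₀‖ ^ 2))
      ≥ 1 / (g + 1) := by
    rw [mul_div_mul_left _ _ (ne_of_gt hnn)]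
    rw [ge_iff_le, div_le_div_iff₀ (by linarith) h2pos]
    linarith [h2]
  refine le_trans ?_ key
  rcases le_total g 1 with h | h
  · calc min (1 / 3 * (1 / g)) (1/3) ≤ 1/3 := min_le_right _ _
    _ ≤ 1 / (g + 1) := by
        rw [div_le_div_iff₀ (by norm_num) (by linarith)]; linarith
  · calc min (1 / 3 * (1 / g)) (1/3) ≤ 1 / 3 * (1 / g) := min_le_left _ _
    _ ≤ 1 / (g + 1) := by
        rw [div_mul_div_comm, one_mul, div_le_div_iff₀ (by linarith) (by linarith)]
        linarith
end

section
/- Let n, d, n₀, d₀, c be complex numbers with d ≠ 0, n ≠ 0, c ≠ 0, d₀ ≠ 0, n₀ ≠ 0, and d - nc = 0. Suppose |c| ≤ k and |n₀/(d₀ - n₀c)| ≤ g where d₀ - n₀c ≠ 0, for positive reals k, g. Then |n/d - n₀/d₀| ≥ 1/(k(1+kg)). -/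
/-- Estimate (4) in the proof of the main theorem: if `d = nc` with all
relevant quantities nonzero, `‖c‖ ≤ k` and `‖n₀/(d₀ - n₀c)‖ ≤ g`, then
`‖n/d - n₀/d₀‖ ≥ 1/(k(1+kg))`. -/
theorem estimate_eq4 (n d n₀ d₀ c : ℂ) (k g : ℝ) (hk : 0 < k) (hg : 0 < g)
    (hd : d ≠ 0) (hn : n ≠ 0) (hc : c ≠ 0) (hd₀ : d₀ ≠ 0) (hn₀ : n₀ ≠ 0)
    (hden : d - n * c = 0) (hden₀ : d₀ - n₀ * c ≠ 0)
    (hck : ‖c‖ ≤ k) (hg₀ : ‖n₀ / (d₀ - n₀ * c)‖ ≤ g) :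
    ‖n / d - n₀ / d₀‖ ≥ 1 / (k * (1 + k * g)) := by
  set w : ℂ := d₀ - n₀ * c with hw
  have hdnc : d = n * c := by linear_combination hden
  have key : n / d - n₀ / d₀ = 1 / (c * (d₀ / w)) := by
    rw [hdnc]
    field_simp
    ring
  rw [key]
  have h1 : d₀ / w = 1 + c * (n₀ / w) := by
    field_simp
    rw [hw]; ring
  have h2 : ‖d₀ / w‖ ≤ 1 + k * g := by
    rw [h1]
    calc ‖(1 : ℂ) + c * (n₀ / w)‖ ≤ ‖(1 : ℂ)‖ + ‖c * (n₀ / w)‖ := norm_add_le _ _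
    _ = 1 + ‖c‖ * ‖n₀ / w‖ := by rw [norm_one, norm_mul]
    _ ≤ 1 + k * g := by
        gcongr
  have hwpos : ‖d₀ / w‖ > 0 := norm_pos_iff.2 (div_ne_zero hd₀ hden₀)
  have hcpos : ‖c‖ > 0 := norm_pos_iff.2 hc
  rw [norm_div, norm_one, norm_mul]
  have hden' : (0 : ℝ) < ‖c‖ * ‖d₀ / w‖ := mul_pos hcpos hwpos
  apply one_div_le_one_div_of_le hden'
  have : (0:ℝ) < 1 + k * g := by positivity
  calc ‖c‖ * ‖d₀ / w‖ ≤ k * (1 + k * g) := by gcongr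
end

section
/- Let α be a real number and z₁, z₂ ∈ 𝔻 (open unit disc). Then |α|·|z₁²z₂² - 1| / (√(|z₁z₂ - α|² + |z₁²z₂² - 1|²)·√(|z₁z₂|² + |z₁²z₂² - 1|²)) ≤ (2/√3)·|α|. Consequently, for the plants p_α = (z₁z₂ - α)/(z₁²z₂² - 1) and p₀ = z₁z₂/(z₁²z₂² - 1), the pointwise chordal distance at every point of the bidisc is at most (2/√3)·|α|. -/
/-- Pointwise chordal distance estimate on the bidisc between the perturbed
plant `p_α = (z₁z₂ - α)/(z₁²z₂² - 1)` and the nominal plant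
`p₀ = z₁z₂/(z₁²z₂² - 1)`: it is at most `(2/√3)·|α|`. -/
theorem bidisc_perturbation_estimate (α : ℝ) (z₁ z₂ : ℂ)
    (h₁ : ‖z₁‖ < 1) (h₂ : ‖z₂‖ < 1) :
    |α| * ‖z₁ ^ 2 * z₂ ^ 2 - 1‖ /
        (Real.sqrt (‖z₁ * z₂ - (α : ℂ)‖ ^ 2 + ‖z₁ ^ 2 * z₂ ^ 2 - 1‖ ^ 2) *
          Real.sqrt (‖z₁ * z₂‖ ^ 2 + ‖z₁ ^ 2 * z₂ ^ 2 - 1‖ ^ 2)) ≤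
      2 / Real.sqrt 3 * |α| := by
  set k := ‖z₁ * z₂‖ with hkdef
  set d := ‖z₁ ^ 2 * z₂ ^ 2 - 1‖ with hddef
  set n := ‖z₁ * z₂ - (α : ℂ)‖ with hndef
  have hk0 : 0 ≤ k := norm_nonneg _
  have hk : k < 1 := by
    rw [hkdef, norm_mul]
    nlinarith [norm_nonneg z₁, norm_nonneg z₂]
  have hsq : z₁ ^ 2 * z₂ ^ 2 = (z₁ * z₂) ^ 2 := by ring
  have hd1 : 1 - k ^ 2 ≤ d := by
    have := norm_sub_norm_le (1 : ℂ) (z₁ ^ 2 * z₂ ^ 2)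
    have h' : ‖(1 : ℂ) - z₁ ^ 2 * z₂ ^ 2‖ = d := by
      rw [hddef, ← norm_neg]; ring_nf
    rw [h', hsq, norm_pow, norm_one] at this
    exact this
  have hd0 : 0 < d := lt_of_lt_of_le (by nlinarith) hd1
  have hn0 : 0 ≤ n := norm_nonneg _
  have hA : d ≤ Real.sqrt (n ^ 2 + d ^ 2) := by
    nlinarith [Real.sq_sqrt (show (0:ℝ) ≤ n ^ 2 + d ^ 2 by positivity),
      Real.sqrt_nonneg (n ^ 2 + d ^ 2), sq_nonneg n]
  have hB : Real.sqrt 3 / 2 ≤ Real.sqrt (k ^ 2 + d ^ 2) := by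
    have hk2 : k ^ 2 ≤ 1 := by nlinarith
    have hdsq : (1 - k ^ 2) ^ 2 ≤ d ^ 2 := by nlinarith
    have h34 : (3 : ℝ) / 4 ≤ k ^ 2 + d ^ 2 := by nlinarith [sq_nonneg (k ^ 2 - 1 / 2)]
    rw [Real.le_sqrt (by positivity)]
    rw [div_pow, Real.sq_sqrt (by norm_num : (0:ℝ) ≤ 3)]
    · nlinarith
    · positivity
  have hApos : 0 < Real.sqrt (n ^ 2 + d ^ 2) := lt_of_lt_of_le hd0 hA
  have hBpos : 0 < Real.sqrt (k ^ 2 + d ^ 2) :=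
    lt_of_lt_of_le (by positivity) hB
  have hAB : d * (Real.sqrt 3 / 2) ≤
      Real.sqrt (n ^ 2 + d ^ 2) * Real.sqrt (k ^ 2 + d ^ 2) :=
    mul_le_mul hA hB (by positivity) hApos.le
  have key : |α| * d / (Real.sqrt (n ^ 2 + d ^ 2) * Real.sqrt (k ^ 2 + d ^ 2)) ≤
      |α| * d / (d * (Real.sqrt 3 / 2)) :=
    div_le_div_of_nonneg_left (by positivity) (by positivity) hAB
  refine key.trans ?_
  have hs3 : (0 : ℝ) < Real.sqrt 3 := by positivity
  have heq : |α| * d / (d * (Real.sqrt 3 / 2)) = 2 / Real.sqrt 3 * |α| := by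
    field_simp
  rw [heq]
end
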